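/- The Aharonov–Bohm operator commutes with the antilinear operator K: for every C² function u : ℝ²∖{0} → ℂ and every point p ∈ ℝ²∖{0}, one has K(−Δ_A u)(p) = (−Δ_A (Ku))(p). (In particular −Δ_A preserves K-real functions.) -/

import Mathlib

noncomputable section

/-- Partial derivative in the `x`-direction of a function on `ℝ²`. -/
def pdx (u : ℝ × ℝ → ℂ) (p : ℝ × ℝ) : ℂ := fderiv ℝ u p (1, 0)

/-- Partial derivative in the `y`-direction of a function on `ℝ²`. -/
def pdy (u : ℝ × ℝ → ℂ) (p : ℝ × ℝ) : ℂ := fderiv ℝ u p (0, 1)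

/-- First component `A₁ = −y/(2r²)` of the Aharonov–Bohm potential with flux `1/2`. -/
def A1 (p : ℝ × ℝ) : ℝ := -p.2 / (2 * (p.1 ^ 2 + p.2 ^ 2))

/-- Second component `A₂ = x/(2r²)` of the Aharonov–Bohm potential with flux `1/2`. -/
def A2 (p : ℝ × ℝ) : ℝ := p.1 / (2 * (p.1 ^ 2 + p.2 ^ 2))

/-- The magnetic derivative `(−i∂ₓ − A₁)u`. -/
def P1 (u : ℝ × ℝ → ℂ) : ℝ × ℝ → ℂ :=
  fun p => -Complex.I * pdx u p - (A1 p : ℂ) * u p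

/-- The magnetic derivative `(−i∂_y − A₂)u`. -/
def P2 (u : ℝ × ℝ → ℂ) : ℝ × ℝ → ℂ :=
  fun p => -Complex.I * pdy u p - (A2 p : ℂ) * u p

/-- The Aharonov–Bohm operator `−Δ_A u = (−i∂ₓ − A₁)²u + (−i∂_y − A₂)²u`. -/
def ABLaplacian (u : ℝ × ℝ → ℂ) : ℝ × ℝ → ℂ :=
  fun p => P1 (P1 u) p + P2 (P2 u) p

/-- The antilinear operator `K`: `(Ku)(x,y) = ((x+iy)/|x+iy|) · conj(u(x,y))`,
i.e. `Ku = e^{iθ} ū` in polar coordinates. -/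
def Kop (u : ℝ × ℝ → ℂ) : ℝ × ℝ → ℂ :=
  fun p => ((p.1 + p.2 * Complex.I) / ‖(p.1 + p.2 * Complex.I : ℂ)‖)
    * (starRingEnd ℂ) (u p)

/-! ### Auxiliary material -/

/-- The phase `e^{iθ} = z/|z|`, written with a real square root. -/
def phi (p : ℝ × ℝ) : ℂ :=
  (p.1 + p.2 * Complex.I) / (Real.sqrt (p.1 ^ 2 + p.2 ^ 2) : ℝ)

theorem Kop_eq (u : ℝ × ℝ → ℂ) (p : ℝ × ℝ) :
    Kop u p = phi p * (starRingEnd ℂ) (u p) := by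
  have : ‖(↑p.1 + ↑p.2 * Complex.I : ℂ)‖ = Real.sqrt (p.1 ^ 2 + p.2 ^ 2) := by
    rw [Complex.norm_def, Complex.normSq_apply]
    simp [pow_two]
  rw [Kop, phi, this]

set_option maxHeartbeats 2000000 in
theorem phi_fderiv (p : ℝ × ℝ) (hp : p ≠ 0) :
    DifferentiableAt ℝ phi p ∧
      fderiv ℝ phi p (1, 0) = 2 * (A1 p : ℂ) * Complex.I * phi p ∧
      fderiv ℝ phi p (0, 1) = 2 * (A2 p : ℂ) * Complex.I * phi p := by
  have hne : p.1 ≠ 0 ∨ p.2 ≠ 0 := by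
    rcases eq_or_ne p.1 0 with h1 | h1
    · right; intro h2; exact hp (Prod.ext h1 h2)
    · left; exact h1
  have hq0 : (0:ℝ) < p.1 ^ 2 + p.2 ^ 2 := by
    rcases hne with h | h
    · nlinarith [sq_nonneg p.2, sq_pos_of_ne_zero h]
    · nlinarith [sq_nonneg p.1, sq_pos_of_ne_zero h]
  have hs0 : (0:ℝ) < Real.sqrt (p.1 ^ 2 + p.2 ^ 2) := Real.sqrt_pos.2 hq0
  have hsq : Real.sqrt (p.1 ^ 2 + p.2 ^ 2) ^ 2 = p.1 ^ 2 + p.2 ^ 2 := Real.sq_sqrt hq0.le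
  have hmul := ((hasFDerivAt_fst (𝕜 := ℝ) (p := p)).mul (hasFDerivAt_fst (𝕜 := ℝ) (p := p))).add
    ((hasFDerivAt_snd (𝕜 := ℝ) (p := p)).mul (hasFDerivAt_snd (𝕜 := ℝ) (p := p)))
  have hq : HasFDerivAt (fun q : ℝ × ℝ => q.1 ^ 2 + q.2 ^ 2) _ p :=
    hmul.congr_of_eventuallyEq (Filter.Eventually.of_forall fun q => by simp only [Pi.add_apply, Pi.pow_apply, Pi.mul_apply]; ring)
  have hr : HasFDerivAt (fun q : ℝ × ℝ => Real.sqrt (q.1 ^ 2 + q.2 ^ 2)) _ p :=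
    (Real.hasDerivAt_sqrt hq0.ne').comp_hasFDerivAt p hq
  have hinv : HasFDerivAt (fun q : ℝ × ℝ => (Real.sqrt (q.1 ^ 2 + q.2 ^ 2))⁻¹) _ p :=
    (hasDerivAt_inv hs0.ne').comp_hasFDerivAt p hr
  have hinvc : HasFDerivAt (fun q : ℝ × ℝ => (((Real.sqrt (q.1 ^ 2 + q.2 ^ 2))⁻¹ : ℝ) : ℂ)) _ p :=
    Complex.ofRealCLM.hasFDerivAt.comp p hinv
  have hz : HasFDerivAt (fun q : ℝ × ℝ => (q.1 : ℂ) + q.2 * Complex.I) _ p :=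
    (Complex.ofRealCLM.hasFDerivAt.comp p (hasFDerivAt_fst (𝕜 := ℝ) (p := p))).add
      ((Complex.ofRealCLM.hasFDerivAt.comp p (hasFDerivAt_snd (𝕜 := ℝ) (p := p))).mul_const Complex.I)
  have hm := hz.mul hinvc
  have hphi : HasFDerivAt phi _ p :=
    hm.congr_of_eventuallyEq (Filter.Eventually.of_forall fun q => by
      rw [phi, div_eq_mul_inv]; push_cast; simp only [Pi.mul_apply])
  refine ⟨hphi.differentiableAt, ?_, ?_⟩ <;> rw [hphi.fderiv] <;>
    simp [A1, A2, phi, Complex.ofReal_inv]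
  all_goals {
    have hsqc : ((Real.sqrt (p.1 ^ 2 + p.2 ^ 2) : ℝ) : ℂ) ^ 2 = (p.1:ℂ) ^ 2 + (p.2:ℂ) ^ 2 := by
      norm_cast
    have hsc : ((Real.sqrt (p.1 ^ 2 + p.2 ^ 2) : ℝ) : ℂ) ≠ 0 := by exact_mod_cast hs0.ne'
    have hqc : (p.1:ℂ) ^ 2 + (p.2:ℂ) ^ 2 ≠ 0 := by
      rw [← hsqc]; exact pow_ne_zero 2 hsc
    clear hphi hm hz hinvc hinv hr hq hmul hsq
    set s : ℂ := ((Real.sqrt (p.1 ^ 2 + p.2 ^ 2) : ℝ) : ℂ) with hs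
    have h2 : (2:ℂ) ≠ 0 := two_ne_zero
    rw [hsqc]
    field_simp
    first
    | linear_combination
        (2*(p.2:ℂ)^2) * Complex.I_sq
    | linear_combination
        (-2*(p.1:ℂ)*(p.2:ℂ)) * Complex.I_sq }

theorem Kop_fderiv (u : ℝ × ℝ → ℂ) (p : ℝ × ℝ) (hp : p ≠ 0)
    (hu : DifferentiableAt ℝ u p) (v : ℝ × ℝ) :
    fderiv ℝ (Kop u) p v
      = fderiv ℝ phi p v * (starRingEnd ℂ) (u p)
        + phi p * (starRingEnd ℂ) (fderiv ℝ u p v) := by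
  obtain ⟨hdphi, -, -⟩ := phi_fderiv p hp
  have hconj : HasFDerivAt (fun q => (starRingEnd ℂ) (u q)) _ p := hu.hasFDerivAt.star
  have hK : HasFDerivAt (Kop u) _ p :=
    (hdphi.hasFDerivAt.mul hconj).congr_of_eventuallyEq
      (Filter.Eventually.of_forall fun q => (Kop_eq u q))
  rw [hK.fderiv]
  simp
  ring

theorem P1_Kop (u : ℝ × ℝ → ℂ) (p : ℝ × ℝ) (hp : p ≠ 0)
    (hu : DifferentiableAt ℝ u p) :
    P1 (Kop u) p = - Kop (P1 u) p := by
  obtain ⟨-, hdx, -⟩ := phi_fderiv p hp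
  have h := Kop_fderiv u p hp hu (1, 0)
  rw [hdx] at h
  simp only [P1, pdx, h, Kop_eq]
  simp only [map_sub, map_mul, Complex.conj_I, Complex.conj_ofReal, map_neg]
  linear_combination (-2*((A1 p : ℝ):ℂ)*phi p*(starRingEnd ℂ) (u p)) * Complex.I_sq

theorem P2_Kop (u : ℝ × ℝ → ℂ) (p : ℝ × ℝ) (hp : p ≠ 0)
    (hu : DifferentiableAt ℝ u p) :
    P2 (Kop u) p = - Kop (P2 u) p := by
  obtain ⟨-, -, hdy⟩ := phi_fderiv p hp
  have h := Kop_fderiv u p hp hu (0, 1)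
  rw [hdy] at h
  simp only [P2, pdy, h, Kop_eq]
  simp only [map_sub, map_mul, Complex.conj_I, Complex.conj_ofReal, map_neg]
  linear_combination (-2*((A2 p : ℝ):ℂ)*phi p*(starRingEnd ℂ) (u p)) * Complex.I_sq

theorem P1_congr {f g : ℝ × ℝ → ℂ} {p : ℝ × ℝ} (h : f =ᶠ[nhds p] g) :
    P1 f p = P1 g p := by
  simp only [P1, pdx, h.fderiv_eq, h.self_of_nhds]

theorem P2_congr {f g : ℝ × ℝ → ℂ} {p : ℝ × ℝ} (h : f =ᶠ[nhds p] g) :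
    P2 f p = P2 g p := by
  simp only [P2, pdy, h.fderiv_eq, h.self_of_nhds]

theorem P1_neg (f : ℝ × ℝ → ℂ) (p : ℝ × ℝ) : P1 (fun q => -(f q)) p = -(P1 f p) := by
  simp only [P1, pdx, fderiv_neg]
  simp
  ring

theorem P2_neg (f : ℝ × ℝ → ℂ) (p : ℝ × ℝ) : P2 (fun q => -(f q)) p = -(P2 f p) := by
  simp only [P2, pdy, fderiv_neg]
  simp
  ring

theorem diff_aux (u : ℝ × ℝ → ℂ) (hu : ContDiffOn ℝ 2 u {p : ℝ × ℝ | p ≠ 0})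
    (p : ℝ × ℝ) (hp : p ≠ 0) :
    DifferentiableAt ℝ (P1 u) p ∧ DifferentiableAt ℝ (P2 u) p := by
  have hS : IsOpen {q : ℝ × ℝ | q ≠ 0} := isOpen_compl_singleton
  have hmem : {q : ℝ × ℝ | q ≠ 0} ∈ nhds p := hS.mem_nhds hp
  have hcA : ContDiffAt ℝ 2 u p := hu.contDiffAt hmem
  have hfd : ContDiffAt ℝ 1 (fderiv ℝ u) p := hcA.fderiv_right (by norm_num)
  have hfd' : DifferentiableAt ℝ (fderiv ℝ u) p := hfd.differentiableAt (by norm_num)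
  have hudiff : DifferentiableAt ℝ u p := hcA.differentiableAt (by norm_num)
  have hne : p.1 ≠ 0 ∨ p.2 ≠ 0 := by
    rcases eq_or_ne p.1 0 with h1 | h1
    · right; intro h2; exact hp (Prod.ext h1 h2)
    · left; exact h1
  have hq0 : (0:ℝ) < p.1 ^ 2 + p.2 ^ 2 := by
    rcases hne with h | h
    · nlinarith [sq_nonneg p.2, sq_pos_of_ne_zero h]
    · nlinarith [sq_nonneg p.1, sq_pos_of_ne_zero h]
  have hden : (2 * (p.1 ^ 2 + p.2 ^ 2)) ≠ 0 := by positivity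
  have hdenD : DifferentiableAt ℝ (fun q : ℝ × ℝ => 2 * (q.1 ^ 2 + q.2 ^ 2)) p :=
    (differentiableAt_const (2:ℝ)).mul
      ((differentiableAt_fst.pow 2).add (differentiableAt_snd.pow 2))
  have hA1r : DifferentiableAt ℝ (fun q : ℝ × ℝ => A1 q) p :=
    (differentiableAt_snd.neg.mul (hdenD.inv hden)).congr_of_eventuallyEq
      (Filter.Eventually.of_forall fun q => by simp [A1, div_eq_mul_inv])
  have hA1 : DifferentiableAt ℝ (fun q : ℝ × ℝ => ((A1 q : ℝ) : ℂ)) p :=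
    Complex.ofRealCLM.differentiableAt.comp p hA1r
  have hA2r : DifferentiableAt ℝ (fun q : ℝ × ℝ => A2 q) p :=
    (differentiableAt_fst.mul (hdenD.inv hden)).congr_of_eventuallyEq
      (Filter.Eventually.of_forall fun q => by simp [A2, div_eq_mul_inv])
  have hA2 : DifferentiableAt ℝ (fun q : ℝ × ℝ => ((A2 q : ℝ) : ℂ)) p :=
    Complex.ofRealCLM.differentiableAt.comp p hA2r
  have hpdx : DifferentiableAt ℝ (fun q => pdx u q) p :=
    hfd'.clm_apply (differentiableAt_const _)
  have hpdy : DifferentiableAt ℝ (fun q => pdy u q) p :=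
    hfd'.clm_apply (differentiableAt_const _)
  constructor
  · exact ((differentiableAt_const (-Complex.I)).mul hpdx).sub (hA1.mul hudiff)
  · exact ((differentiableAt_const (-Complex.I)).mul hpdy).sub (hA2.mul hudiff)

/-- The Aharonov–Bohm operator commutes with the antilinear operator `K`:
for every `C²` function `u` on `ℝ²∖{0}` and every point `p ≠ 0`,
`K(−Δ_A u)(p) = (−Δ_A(Ku))(p)`. In particular `−Δ_A` preserves K-real functions. -/
theorem ABLaplacian_comm_K (u : ℝ × ℝ → ℂ)
    (hu : ContDiffOn ℝ 2 u {p : ℝ × ℝ | p ≠ 0}) (p : ℝ × ℝ) (hp : p ≠ 0) :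
    Kop (ABLaplacian u) p = ABLaplacian (Kop u) p := by
  have hS : IsOpen {q : ℝ × ℝ | q ≠ 0} := isOpen_compl_singleton
  have hmem : {q : ℝ × ℝ | q ≠ 0} ∈ nhds p := hS.mem_nhds hp
  have hudiff : ∀ q ≠ (0 : ℝ × ℝ), DifferentiableAt ℝ u q := fun q hq =>
    (hu.contDiffAt (hS.mem_nhds hq)).differentiableAt (by norm_num)
  -- P1 (Kop u) = - Kop (P1 u) near p
  have hev1 : (P1 (Kop u)) =ᶠ[nhds p] (fun q => -(Kop (P1 u) q)) := by
    filter_upwards [hmem] with q hq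
    exact P1_Kop u q hq (hudiff q hq)
  have hev2 : (P2 (Kop u)) =ᶠ[nhds p] (fun q => -(Kop (P2 u) q)) := by
    filter_upwards [hmem] with q hq
    exact P2_Kop u q hq (hudiff q hq)
  obtain ⟨hP1d, hP2d⟩ := diff_aux u hu p hp
  have h1 : P1 (P1 (Kop u)) p = Kop (P1 (P1 u)) p := by
    rw [P1_congr hev1, P1_neg, P1_Kop (P1 u) p hp hP1d, neg_neg]
  have h2 : P2 (P2 (Kop u)) p = Kop (P2 (P2 u)) p := by
    rw [P2_congr hev2, P2_neg, P2_Kop (P2 u) p hp hP2d, neg_neg]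
  rw [ABLaplacian, h1, h2, Kop_eq, Kop_eq, Kop_eq, ABLaplacian]
  rw [map_add]
  ring

end
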